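/- arXiv:2005.03219 — 2 statements merged into one kernel-verified Lean document; each statement's English description precedes it below -/
import Mathlib

section
/- Let X be a solution of the SDE dX(t) = b(t,X(t))dt + σ(t,X(t))dB(t) on [0,T] with bounded Lipschitz (in space), 1/2-Hölder (in time) coefficients and uniformly elliptic σ, and let X^{(n)} be its Euler–Maruyama scheme with step T/n. Then for every f ∈ BV(ℝ^d) ∩ L^∞(ℝ^d), every q ∈ [1,∞) and every δ ∈ (0,1), there is a constant C(q,δ) independent of n such that E[|f(X(T)) − f(X^{(n)}(T))|^q] ≤ C(q,δ) n^{−δ/2}. -/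
open MeasureTheory Metric Filter Set
open scoped ENNReal Topology

noncomputable section

abbrev Euc (d : ℕ) := EuclideanSpace ℝ (Fin d)

/-- Hardy--Littlewood maximal function of a measure. -/
def maximal {d : ℕ} (ν : Measure (Euc d)) (x : Euc d) : ℝ≥0∞ :=
  ⨆ (s : ℝ) (_ : 0 < s), ν (closedBall x s) / volume (closedBall x s)

/-- Restricted Hardy--Littlewood maximal function of a measure. -/
def maximalR {d : ℕ} (R : ℝ) (ν : Measure (Euc d)) (x : Euc d) : ℝ≥0∞ :=
  ⨆ (s : ℝ) (_ : s ∈ Set.Ioc 0 R), ν (closedBall x s) / volume (closedBall x s)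

lemma aux_maximalR_le {d : ℕ} (R : ℝ) (ν : Measure (Euc d)) (x : Euc d) :
    maximalR R ν x ≤ maximal ν x := by
  refine iSup₂_le fun s hs => ?_
  exact le_iSup₂ (f := fun (s : ℝ) (_ : 0 < s) =>
    ν (closedBall x s) / volume (closedBall x s)) s hs.1

lemma aux_le_maximal {d : ℕ} (ν : Measure (Euc d)) (x : Euc d) {s : ℝ} (hs : 0 < s) :
    ν (closedBall x s) / volume (closedBall x s) ≤ maximal ν x :=
  le_iSup₂ (f := fun (s : ℝ) (_ : 0 < s) =>
    ν (closedBall x s) / volume (closedBall x s)) s hs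

lemma aux_layer (a b : ℝ) :
    (∫⁻ t, ENNReal.ofReal |(if t < a then (1:ℝ) else 0) - (if t < b then (1:ℝ) else 0)|
      ∂(volume : Measure ℝ)) = ENNReal.ofReal |a - b| := by
  have h : ∀ t : ℝ, ENNReal.ofReal |(if t < a then (1:ℝ) else 0) - (if t < b then (1:ℝ) else 0)|
      = (Set.Ico (min a b) (max a b)).indicator (fun _ => (1:ℝ≥0∞)) t := by
    intro t
    rcases lt_or_ge t a with h1 | h1 <;> rcases lt_or_ge t b with h2 | h2
    · have hm : ¬ min a b ≤ t := not_le.2 (lt_min h1 h2)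
      simp [Set.indicator_apply, Set.mem_Ico, h1, h2, hm]
    · have hm : min a b ≤ t := (min_le_right a b).trans h2
      have hM : t < max a b := lt_max_iff.2 (Or.inl h1)
      simp [Set.indicator_apply, Set.mem_Ico, h1, not_lt.2 h2, hm, hM]
    · have hm : min a b ≤ t := (min_le_left a b).trans h1
      have hM : t < max a b := lt_max_iff.2 (Or.inr h2)
      simp [Set.indicator_apply, Set.mem_Ico, not_lt.2 h1, h2, hm, hM]
    · have hM : ¬ t < max a b := not_lt.2 (max_le h1 h2)
      simp [Set.indicator_apply, Set.mem_Ico, not_lt.2 h1, not_lt.2 h2, hM]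
  simp_rw [h]
  rw [lintegral_indicator_const measurableSet_Ico, one_mul, Real.volume_Ico,
    max_sub_min_eq_abs, abs_sub_comm]

lemma aux_push {d : ℕ} {Ω : Type*} [MeasurableSpace Ω] (P : Measure Ω) (X : Ω → Euc d)
    (hX : Measurable X) (pX : Euc d → ℝ≥0∞) (h : P.map X = volume.withDensity pX)
    (D : ℝ≥0∞) (hb : essSup pX volume ≤ D) (U : Set (Euc d)) :
    P (X ⁻¹' U) ≤ D * volume U := by
  have hmU' : MeasurableSet (toMeasurable volume U) := measurableSet_toMeasurable _ _
  have h1 : P (X ⁻¹' U) ≤ P (X ⁻¹' toMeasurable volume U) :=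
    measure_mono (Set.preimage_mono (subset_toMeasurable _ _))
  have h2 : P (X ⁻¹' toMeasurable volume U) = (volume.withDensity pX) (toMeasurable volume U) := by
    rw [← Measure.map_apply hX hmU', h]
  have h3 : (volume.withDensity pX) (toMeasurable volume U) ≤ D * volume (toMeasurable volume U) := by
    rw [withDensity_apply _ hmU']
    calc ∫⁻ x in toMeasurable volume U, pX x
        ≤ ∫⁻ _x in toMeasurable volume U, D := lintegral_mono_ae
          (ae_restrict_of_ae ((ENNReal.ae_le_essSup pX).mono fun x hx => hx.trans hb))
      _ = D * volume (toMeasurable volume U) := setLIntegral_const _ D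
  rw [measure_toMeasurable] at h3
  exact h1.trans (h2 ▸ h3)

set_option maxHeartbeats 2000000 in
/-- Theorem 3.6 (case `f ∈ BV ∩ L^∞`): strong rate for irregular functionals of the
Euler–Maruyama scheme.  The SDE hypotheses (bounded Lipschitz-in-space, ½-Hölder-in-time
coefficients, uniformly elliptic diffusion) enter through their consequences: `XT` is the
solution at time `T`, `Xn n` the Euler–Maruyama scheme with step `T/n`, `hstrong` the
strong rate ½ for all moments, and the densities of `XT` and `Xn n` are bounded uniformly
in `n` (Gaussian bounds).  `f ∈ BV(ℝ^d) ∩ L^∞(ℝ^d)`, with `Df` its variation measure,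
`DI t` the variation measures of the super-level sets (coarea), and `K₀`, `A₁` the constants
of the BV pointwise maximal estimate and of the weak (1,1) maximal inequality.
Conclusion: for every `q ∈ [1,∞)` and `δ ∈ (0,1)` there is `C < ∞`, independent of `n`, with
`E[|f(X(T)) − f(X^{(n)}(T))|^q] ≤ C n^{−δ/2}`. -/
theorem stmt_16 {d : ℕ} {Ω : Type*} [MeasurableSpace Ω] (P : Measure Ω) [IsProbabilityMeasure P]
    (XT : Ω → Euc d) (Xn : ℕ → Ω → Euc d)
    (hXT : Measurable XT) (hXn : ∀ n, Measurable (Xn n))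
    (hstrong : ∀ p : ℝ, 0 < p → ∃ Cp : ℝ≥0∞, Cp ≠ ∞ ∧ ∀ n : ℕ, 1 ≤ n →
      ∫⁻ ω, edist (XT ω) (Xn n ω) ^ p ∂P ≤ Cp * (n : ℝ≥0∞) ^ (-(p / 2)))
    (pX : Euc d → ℝ≥0∞) (pXn : ℕ → Euc d → ℝ≥0∞)
    (hdX : P.map XT = volume.withDensity pX)
    (hdXn : ∀ n : ℕ, 1 ≤ n → P.map (Xn n) = volume.withDensity (pXn n))
    (D : ℝ≥0∞) (hD : D ≠ ∞)
    (hbX : essSup pX volume ≤ D) (hbXn : ∀ n : ℕ, 1 ≤ n → essSup (pXn n) volume ≤ D)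
    (f : Euc d → ℝ) (hf1 : Integrable f volume) (hfb : eLpNorm f ⊤ volume ≠ ∞)
    (Df : Measure (Euc d)) [IsFiniteMeasure Df]
    (DI : ℝ → Measure (Euc d))
    (hcoarea : ∫⁻ t, DI t Set.univ ∂(volume : Measure ℝ) = Df Set.univ)
    (K₀ A₁ : ℝ) (hK₀ : 0 < K₀) (hA₁ : 0 < A₁)
    (hpt : ∀ᵐ t ∂(volume : Measure ℝ), IsFiniteMeasure (DI t) ∧
      ∀ᵐ x ∂(volume : Measure (Euc d)), ∀ᵐ y ∂(volume : Measure (Euc d)),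
        ENNReal.ofReal |({z | t < f z}).indicator (fun _ => (1:ℝ)) x
            - ({z | t < f z}).indicator (fun _ => (1:ℝ)) y|
          ≤ ENNReal.ofReal (K₀ * dist x y)
            * (maximalR (2 * dist x y) (DI t) x + maximalR (2 * dist x y) (DI t) y))
    (hweak : ∀ ν : Measure (Euc d), IsFiniteMeasure ν → ∀ lam : ℝ≥0∞, lam ≠ 0 →
      volume {x : Euc d | lam < maximal ν x} ≤ ENNReal.ofReal A₁ * ν Set.univ / lam)
    (q δ : ℝ) (hq : 1 ≤ q) (hδ0 : 0 < δ) (hδ1 : δ < 1) :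
    ∃ C : ℝ≥0∞, C ≠ ∞ ∧ ∀ n : ℕ, 1 ≤ n →
      ∫⁻ ω, ENNReal.ofReal |f (XT ω) - f (Xn n ω)| ^ q ∂P
        ≤ C * (n : ℝ≥0∞) ^ (-(δ / 2)) := by
  classical
  -- measurable representative of f
  obtain ⟨f', hf'm, hff'⟩ : ∃ f' : Euc d → ℝ, Measurable f' ∧ f =ᵐ[(volume : Measure (Euc d))] f' :=
    ⟨hf1.1.mk f, hf1.1.stronglyMeasurable_mk.measurable, hf1.1.ae_eq_mk⟩
  obtain ⟨Mr, hMrdef⟩ : ∃ r : ℝ, r = (eLpNorm f ⊤ volume).toReal := ⟨_, rfl⟩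
  have hMr0 : 0 ≤ Mr := by rw [hMrdef]; exact ENNReal.toReal_nonneg
  have hfbd : ∀ᵐ x ∂(volume : Measure (Euc d)), |f' x| ≤ Mr := by
    filter_upwards [ae_le_eLpNormEssSup (f := f) (μ := (volume : Measure (Euc d))), hff']
      with x hx hx2
    rw [← hx2, hMrdef]
    have h1 : (‖f x‖₊ : ℝ≥0∞) ≤ eLpNorm f ⊤ volume := by
      rw [eLpNorm_exponent_top]; exact hx
    have h2 := ENNReal.toReal_mono hfb h1
    simpa [Real.norm_eq_abs] using h2
  have h1δ : (0:ℝ) < 1 - δ := by linarith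
  obtain ⟨p, hpdef⟩ : ∃ r : ℝ, r = δ / (1 - δ) := ⟨_, rfl⟩
  have hp : 0 < p := by rw [hpdef]; exact div_pos hδ0 h1δ
  have hpδ : p * (1 - δ) = δ := by rw [hpdef]; field_simp
  obtain ⟨Cp, hCp, hCpb⟩ := hstrong p hp
  -- transfer of a.e. statements from volume to P along the laws
  have transferX : ∀ R : Euc d → Prop, (∀ᵐ x ∂(volume : Measure (Euc d)), R x) →
      ∀ᵐ ω ∂P, R (XT ω) := by
    intro R hR
    refine ae_of_ae_map hXT.aemeasurable ?_
    rw [hdX]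
    exact hR.filter_mono (withDensity_absolutelyContinuous volume pX).ae_le
  have transferY : ∀ n : ℕ, 1 ≤ n → ∀ R : Euc d → Prop,
      (∀ᵐ x ∂(volume : Measure (Euc d)), R x) → ∀ᵐ ω ∂P, R (Xn n ω) := by
    intro n hn R hR
    refine ae_of_ae_map (hXn n).aemeasurable ?_
    rw [hdXn n hn]
    exact hR.filter_mono (withDensity_absolutelyContinuous volume (pXn n)).ae_le
  -- constants
  obtain ⟨κ₁, hκ₁def⟩ : ∃ c : ℝ≥0∞, c = D * ENNReal.ofReal A₁ * ENNReal.ofReal (8 * K₀) := ⟨_, rfl⟩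
  obtain ⟨κ₄, hκ₄def⟩ : ∃ c : ℝ≥0∞,
      c = D * (ENNReal.ofReal A₁ * (ENNReal.ofReal A₁ * ENNReal.ofReal (16 * K₀)) * 2) := ⟨_, rfl⟩
  obtain ⟨κ, hκdef⟩ : ∃ c : ℝ≥0∞, c = κ₁ + κ₁ + κ₄ := ⟨_, rfl⟩
  have hκ₁top : κ₁ ≠ ⊤ := by
    rw [hκ₁def]
    exact ENNReal.mul_ne_top (ENNReal.mul_ne_top hD ENNReal.ofReal_ne_top) ENNReal.ofReal_ne_top
  have hκ₄top : κ₄ ≠ ⊤ := by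
    rw [hκ₄def]
    refine ENNReal.mul_ne_top hD (ENNReal.mul_ne_top (ENNReal.mul_ne_top ENNReal.ofReal_ne_top
      (ENNReal.mul_ne_top ENNReal.ofReal_ne_top ENNReal.ofReal_ne_top)) (by norm_num))
  have hκtop : κ ≠ ⊤ := by
    rw [hκdef]
    exact ENNReal.add_ne_top.2 ⟨ENNReal.add_ne_top.2 ⟨hκ₁top, hκ₁top⟩, hκ₄top⟩
  obtain ⟨C', hC'def⟩ : ∃ c : ℝ≥0∞,
      c = Cp * ENNReal.ofReal (Mr - -Mr) + κ * Df Set.univ := ⟨_, rfl⟩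
  have hC'top : C' ≠ ⊤ := by
    rw [hC'def]
    exact ENNReal.add_ne_top.2 ⟨ENNReal.mul_ne_top hCp ENNReal.ofReal_ne_top,
      ENNReal.mul_ne_top hκtop (measure_ne_top _ _)⟩
  -- main estimate for the first power of the difference
  have key : ∀ n : ℕ, 1 ≤ n →
      (∫⁻ ω, ENNReal.ofReal |f' (XT ω) - f' (Xn n ω)| ∂P)
        ≤ C' * (n : ℝ≥0∞) ^ (-(δ / 2)) := by
    intro n hn
    have hn0 : (0:ℝ) < (n:ℝ) := by exact_mod_cast hn
    have hnE0 : ((n:ℕ) : ℝ≥0∞) ≠ 0 := by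
      simp only [ne_eq, Nat.cast_eq_zero]; omega
    have hnEt : ((n:ℕ) : ℝ≥0∞) ≠ ⊤ := ENNReal.natCast_ne_top n
    obtain ⟨ρ, hρdef⟩ : ∃ r : ℝ, r = (n:ℝ) ^ (-(δ / 2)) := ⟨_, rfl⟩
    have hρ : 0 < ρ := by rw [hρdef]; exact Real.rpow_pos_of_pos hn0 _
    have hρE : ENNReal.ofReal ρ = ((n:ℕ) : ℝ≥0∞) ^ (-(δ / 2)) := by
      rw [hρdef, ← ENNReal.ofReal_natCast n, ENNReal.ofReal_rpow_of_pos hn0]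
    obtain ⟨lam, hlamdef⟩ : ∃ r : ℝ, r = (8 * (K₀ * ρ))⁻¹ := ⟨_, rfl⟩
    have hlam : 0 < lam := by rw [hlamdef]; positivity
    have hlamE0 : ENNReal.ofReal lam ≠ 0 := (ENNReal.ofReal_pos.2 hlam).ne'
    have hrpow_ne_top : ((n:ℕ) : ℝ≥0∞) ^ (-(δ / 2)) ≠ ⊤ := by
      rw [← hρE]; exact ENNReal.ofReal_ne_top
    have hlaminv : (ENNReal.ofReal lam)⁻¹
        = ENNReal.ofReal (8 * K₀) * ((n:ℕ) : ℝ≥0∞) ^ (-(δ / 2)) := by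
      rw [← hρE, ← ENNReal.ofReal_mul (by positivity), ← ENNReal.ofReal_inv_of_pos hlam]
      congr 1
      rw [hlamdef, inv_inv]
      ring
    obtain ⟨F2, hF2def⟩ : ∃ F : Ω → ℝ → ℝ≥0∞, F = fun ω t =>
        ENNReal.ofReal |(if t < f' (XT ω) then (1:ℝ) else 0)
          - (if t < f' (Xn n ω) then (1:ℝ) else 0)| := ⟨_, rfl⟩
    have hmeas : Measurable (Function.uncurry F2) := by
      have hma : Measurable fun pr : Ω × ℝ => (if pr.2 < f' (XT pr.1) then (1:ℝ) else 0) :=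
        Measurable.ite (measurableSet_lt measurable_snd ((hf'm.comp hXT).comp measurable_fst))
          measurable_const measurable_const
      have hmb : Measurable fun pr : Ω × ℝ => (if pr.2 < f' (Xn n pr.1) then (1:ℝ) else 0) :=
        Measurable.ite (measurableSet_lt measurable_snd ((hf'm.comp (hXn n)).comp measurable_fst))
          measurable_const measurable_const
      have : Function.uncurry F2 = fun pr : Ω × ℝ =>
          ENNReal.ofReal |(if pr.2 < f' (XT pr.1) then (1:ℝ) else 0)
            - (if pr.2 < f' (Xn n pr.1) then (1:ℝ) else 0)| := by
        funext pr
        rw [hF2def]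
        rfl
      rw [this]
      exact ENNReal.measurable_ofReal.comp ((hma.sub hmb).abs)
    have hbx : ∀ᵐ ω ∂P, |f' (XT ω)| ≤ Mr := transferX _ hfbd
    have hby : ∀ᵐ ω ∂P, |f' (Xn n ω)| ≤ Mr := transferY n hn _ hfbd
    -- the per-t bound
    have hmain : ∀ᵐ t ∂(volume : Measure ℝ), (∫⁻ ω, F2 ω t ∂P)
        ≤ (Set.Icc (-Mr) Mr).indicator (fun _ => Cp * ((n:ℕ) : ℝ≥0∞) ^ (-(δ / 2))) t
          + κ * ((n:ℕ) : ℝ≥0∞) ^ (-(δ / 2)) * DI t Set.univ := by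
      filter_upwards [hpt] with t ht
      obtain ⟨htfin, htQ⟩ := ht
      haveI := htfin
      by_cases hTin : t ∈ Set.Icc (-Mr) Mr
      swap
      · -- outside the interval the integrand vanishes a.e.
        have hz : ∀ᵐ ω ∂P, F2 ω t = 0 := by
          rw [Set.mem_Icc] at hTin
          push_neg at hTin
          filter_upwards [hbx, hby] with ω h1 h2
          rw [hF2def]
          dsimp only
          rcases lt_or_ge t (-Mr) with hc | hc
          · have ha : t < f' (XT ω) := lt_of_lt_of_le hc (abs_le.mp h1).1
            have hb : t < f' (Xn n ω) := lt_of_lt_of_le hc (abs_le.mp h2).1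
            simp [ha, hb]
          · have hMt := hTin hc
            have ha : ¬ t < f' (XT ω) := not_lt.2 ((abs_le.mp h1).2.trans hMt.le)
            have hb : ¬ t < f' (Xn n ω) := not_lt.2 ((abs_le.mp h2).2.trans hMt.le)
            simp [ha, hb]
        calc (∫⁻ ω, F2 ω t ∂P) = ∫⁻ _ω, 0 ∂P := lintegral_congr_ae hz
          _ = 0 := lintegral_zero
          _ ≤ _ := zero_le
      · -- good t inside the interval
        -- restate the BV estimate with f' and `if`s
        have hQ' : ∀ᵐ x ∂(volume : Measure (Euc d)), ∀ᵐ y ∂(volume : Measure (Euc d)),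
            ENNReal.ofReal |(if t < f' x then (1:ℝ) else 0) - (if t < f' y then (1:ℝ) else 0)|
              ≤ ENNReal.ofReal (K₀ * dist x y)
                * (maximalR (2 * dist x y) (DI t) x + maximalR (2 * dist x y) (DI t) y) := by
          filter_upwards [htQ, hff'] with x hx hfx
          filter_upwards [hx, hff'] with y hy hfy
          simpa [Set.indicator_apply, Set.mem_setOf_eq, hfx, hfy] using hy
        have hQsym : ∀ᵐ y ∂(volume : Measure (Euc d)), ∀ᵐ x ∂(volume : Measure (Euc d)),
            ENNReal.ofReal |(if t < f' x then (1:ℝ) else 0) - (if t < f' y then (1:ℝ) else 0)|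
              ≤ ENNReal.ofReal (K₀ * dist x y)
                * (maximalR (2 * dist x y) (DI t) x + maximalR (2 * dist x y) (DI t) y) := by
          filter_upwards [hQ'] with a ha
          filter_upwards [ha] with b hb
          calc ENNReal.ofReal |(if t < f' b then (1:ℝ) else 0) - (if t < f' a then (1:ℝ) else 0)|
              = ENNReal.ofReal |(if t < f' a then (1:ℝ) else 0) - (if t < f' b then (1:ℝ) else 0)| := by
                rw [abs_sub_comm]
            _ ≤ ENNReal.ofReal (K₀ * dist a b)
                * (maximalR (2 * dist a b) (DI t) a + maximalR (2 * dist a b) (DI t) b) := hb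
            _ = ENNReal.ofReal (K₀ * dist b a)
                * (maximalR (2 * dist b a) (DI t) b + maximalR (2 * dist b a) (DI t) a) := by
                rw [dist_comm a b,
                  add_comm (maximalR (2 * dist b a) (DI t) a) (maximalR (2 * dist b a) (DI t) b)]
        have h1 : ∀ᵐ ω ∂P, ∀ᵐ w ∂(volume : Measure (Euc d)),
            ENNReal.ofReal |(if t < f' (XT ω) then (1:ℝ) else 0) - (if t < f' w then (1:ℝ) else 0)|
              ≤ ENNReal.ofReal (K₀ * dist (XT ω) w)
                * (maximalR (2 * dist (XT ω) w) (DI t) (XT ω)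
                    + maximalR (2 * dist (XT ω) w) (DI t) w) :=
          transferX _ hQ'
        have h2 : ∀ᵐ ω ∂P, ∀ᵐ w ∂(volume : Measure (Euc d)),
            ENNReal.ofReal |(if t < f' w then (1:ℝ) else 0) - (if t < f' (Xn n ω) then (1:ℝ) else 0)|
              ≤ ENNReal.ofReal (K₀ * dist w (Xn n ω))
                * (maximalR (2 * dist w (Xn n ω)) (DI t) w
                    + maximalR (2 * dist w (Xn n ω)) (DI t) (Xn n ω)) :=
          transferY n hn _ hQsym
        obtain ⟨S, hSdef⟩ : ∃ s : Set (Euc d),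
            s = {w : Euc d | ENNReal.ofReal lam ≤ maximal (DI t) w} := ⟨_, rfl⟩
        have hvolS : volume S ≤ ENNReal.ofReal A₁ * DI t Set.univ / ENNReal.ofReal (lam / 2) := by
          refine le_trans (measure_mono ?_)
            (hweak (DI t) htfin _ (ENNReal.ofReal_pos.2 (by linarith)).ne')
          rw [hSdef]
          intro w hw
          exact lt_of_lt_of_le ((ENNReal.ofReal_lt_ofReal_iff hlam).2 (by linarith)) hw
        have hSfin : IsFiniteMeasure (volume.restrict S) := by
          constructor
          rw [Measure.restrict_apply_univ]
          refine lt_of_le_of_lt hvolS (ENNReal.div_lt_top ?_ (ENNReal.ofReal_pos.2 (by linarith)).ne')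
          exact ENNReal.mul_ne_top ENNReal.ofReal_ne_top (measure_ne_top _ _)
        have step : ∀ (E : Set Ω) (ω : Ω), ω ∈ E →
            (1:ℝ≥0∞) ≤ (toMeasurable P E).indicator (fun _ => (1:ℝ≥0∞)) ω := by
          intro E ω hE
          simp [Set.indicator_of_mem (subset_toMeasurable P E hE)]
        -- the pointwise estimate
        have hptwise : ∀ᵐ ω ∂P, F2 ω t
            ≤ (toMeasurable P (XT ⁻¹' {x | ENNReal.ofReal lam < maximal (DI t) x})).indicator
                (fun _ => (1:ℝ≥0∞)) ω
              + (toMeasurable P (Xn n ⁻¹' {x | ENNReal.ofReal lam < maximal (DI t) x})).indicator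
                (fun _ => (1:ℝ≥0∞)) ω
              + (toMeasurable P {ω' | ρ < dist (XT ω') (Xn n ω')}).indicator
                (fun _ => (1:ℝ≥0∞)) ω
              + (toMeasurable P (Xn n ⁻¹' {y | (2:ℝ≥0∞)⁻¹ < maximal (volume.restrict S) y})).indicator
                (fun _ => (1:ℝ≥0∞)) ω := by
          filter_upwards [h1, h2] with ω hω1 hω2
          by_cases hxy : (if t < f' (XT ω) then (1:ℝ) else 0) = (if t < f' (Xn n ω) then (1:ℝ) else 0)
          · rw [hF2def]
            dsimp only
            rw [hxy, sub_self, abs_zero, ENNReal.ofReal_zero]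
            exact zero_le
          · have habs0 : |(if t < f' (XT ω) then (1:ℝ) else 0)
                - (if t < f' (Xn n ω) then (1:ℝ) else 0)| = 1 := by
              by_cases ha : t < f' (XT ω) <;> by_cases hb : t < f' (Xn n ω) <;>
                simp [ha, hb] at hxy ⊢
            have hd1 : F2 ω t = 1 := by
              rw [hF2def]
              dsimp only
              rw [habs0, ENNReal.ofReal_one]
            rw [hd1]
            rcases lt_or_ge (ENNReal.ofReal lam) (maximal (DI t) (XT ω)) with hMx | hMx
            · exact le_trans (step _ ω hMx) (le_add_right (le_add_right le_self_add))
            rcases lt_or_ge (ENNReal.ofReal lam) (maximal (DI t) (Xn n ω)) with hMy | hMy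
            · exact le_trans (step _ ω hMy) (le_add_right (le_add_right le_add_self))
            rcases lt_or_ge ρ (dist (XT ω) (Xn n ω)) with hdist | hdist
            · exact le_trans (step _ ω hdist) (le_add_right le_add_self)
            -- main case
            have hxyne : XT ω ≠ Xn n ω := fun h => hxy (by rw [h])
            have hDpos : 0 < dist (XT ω) (Xn n ω) := dist_pos.2 hxyne
            have hball : ∀ᵐ w ∂(volume : Measure (Euc d)),
                w ∈ ball (Xn n ω) (dist (XT ω) (Xn n ω)) → w ∈ S := by
              filter_upwards [hω1, hω2] with w hw1 hw2 hmem
              have hdwy : dist w (Xn n ω) < dist (XT ω) (Xn n ω) := mem_ball.mp hmem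
              have hdxw : dist (XT ω) w ≤ 2 * dist (XT ω) (Xn n ω) := by
                calc dist (XT ω) w ≤ dist (XT ω) (Xn n ω) + dist (Xn n ω) w := dist_triangle _ _ _
                  _ ≤ dist (XT ω) (Xn n ω) + dist (XT ω) (Xn n ω) := by
                      rw [dist_comm (Xn n ω) w]; exact add_le_add le_rfl hdwy.le
                  _ = 2 * dist (XT ω) (Xn n ω) := by ring
              have hc0 : ENNReal.ofReal (4 * (K₀ * dist (XT ω) (Xn n ω))) ≠ 0 :=
                (ENNReal.ofReal_pos.2 (by positivity)).ne'
              have hct : ENNReal.ofReal (4 * (K₀ * dist (XT ω) (Xn n ω))) ≠ ⊤ :=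
                ENNReal.ofReal_ne_top
              have hb1 : ENNReal.ofReal |(if t < f' (XT ω) then (1:ℝ) else 0)
                    - (if t < f' w then (1:ℝ) else 0)|
                  ≤ ENNReal.ofReal (2 * (K₀ * dist (XT ω) (Xn n ω)))
                    * (ENNReal.ofReal lam + maximal (DI t) w) := by
                refine le_trans hw1 (mul_le_mul' (ENNReal.ofReal_le_ofReal (by nlinarith [hK₀.le])) ?_)
                exact add_le_add ((aux_maximalR_le _ _ _).trans hMx) (aux_maximalR_le _ _ _)
              have hb2 : ENNReal.ofReal |(if t < f' w then (1:ℝ) else 0)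
                    - (if t < f' (Xn n ω) then (1:ℝ) else 0)|
                  ≤ ENNReal.ofReal (2 * (K₀ * dist (XT ω) (Xn n ω)))
                    * (maximal (DI t) w + ENNReal.ofReal lam) := by
                refine le_trans hw2 (mul_le_mul' (ENNReal.ofReal_le_ofReal (by nlinarith [hK₀.le])) ?_)
                exact add_le_add (aux_maximalR_le _ _ _) ((aux_maximalR_le _ _ _).trans hMy)
              have key1 : (1:ℝ≥0∞) ≤ ENNReal.ofReal (4 * (K₀ * dist (XT ω) (Xn n ω))) * ENNReal.ofReal lam
                  + ENNReal.ofReal (4 * (K₀ * dist (XT ω) (Xn n ω))) * maximal (DI t) w := by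
                have htri : (1:ℝ) ≤ |(if t < f' (XT ω) then (1:ℝ) else 0)
                      - (if t < f' w then (1:ℝ) else 0)|
                    + |(if t < f' w then (1:ℝ) else 0) - (if t < f' (Xn n ω) then (1:ℝ) else 0)| := by
                  calc (1:ℝ) = |(if t < f' (XT ω) then (1:ℝ) else 0)
                        - (if t < f' (Xn n ω) then (1:ℝ) else 0)| := habs0.symm
                    _ ≤ _ := abs_sub_le _ _ _
                calc (1:ℝ≥0∞) = ENNReal.ofReal 1 := ENNReal.ofReal_one.symm
                  _ ≤ ENNReal.ofReal (|(if t < f' (XT ω) then (1:ℝ) else 0)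
                        - (if t < f' w then (1:ℝ) else 0)|
                      + |(if t < f' w then (1:ℝ) else 0)
                        - (if t < f' (Xn n ω) then (1:ℝ) else 0)|) :=
                      ENNReal.ofReal_le_ofReal htri
                  _ = ENNReal.ofReal |(if t < f' (XT ω) then (1:ℝ) else 0)
                        - (if t < f' w then (1:ℝ) else 0)|
                      + ENNReal.ofReal |(if t < f' w then (1:ℝ) else 0)
                        - (if t < f' (Xn n ω) then (1:ℝ) else 0)| :=
                      ENNReal.ofReal_add (abs_nonneg _) (abs_nonneg _)
                  _ ≤ ENNReal.ofReal (2 * (K₀ * dist (XT ω) (Xn n ω)))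
                        * (ENNReal.ofReal lam + maximal (DI t) w)
                      + ENNReal.ofReal (2 * (K₀ * dist (XT ω) (Xn n ω)))
                        * (maximal (DI t) w + ENNReal.ofReal lam) := add_le_add hb1 hb2
                  _ = ENNReal.ofReal (4 * (K₀ * dist (XT ω) (Xn n ω))) * ENNReal.ofReal lam
                      + ENNReal.ofReal (4 * (K₀ * dist (XT ω) (Xn n ω))) * maximal (DI t) w := by
                      rw [add_comm (maximal (DI t) w) (ENNReal.ofReal lam), ← add_mul,
                        ← ENNReal.ofReal_add (by positivity) (by positivity)]
                      have he : 2 * (K₀ * dist (XT ω) (Xn n ω)) + 2 * (K₀ * dist (XT ω) (Xn n ω))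
                          = 4 * (K₀ * dist (XT ω) (Xn n ω)) := by ring
                      rw [he, mul_add]
              have hchalf : ENNReal.ofReal (4 * (K₀ * dist (XT ω) (Xn n ω))) * ENNReal.ofReal lam
                  ≤ (2:ℝ≥0∞)⁻¹ := by
                rw [← ENNReal.ofReal_mul (by positivity)]
                calc ENNReal.ofReal (4 * (K₀ * dist (XT ω) (Xn n ω)) * lam)
                    ≤ ENNReal.ofReal (2⁻¹ : ℝ) := by
                      refine ENNReal.ofReal_le_ofReal ?_
                      have h8 : (0:ℝ) < 8 * (K₀ * ρ) := by positivity
                      rw [hlamdef, ← div_eq_mul_inv, div_le_iff₀ h8]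
                      nlinarith [mul_le_mul_of_nonneg_left hdist hK₀.le]
                  _ = (2:ℝ≥0∞)⁻¹ := by
                      rw [ENNReal.ofReal_inv_of_pos (by norm_num : (0:ℝ) < 2)]
                      norm_num
              have hMwge : (2:ℝ≥0∞)⁻¹ ≤ ENNReal.ofReal (4 * (K₀ * dist (XT ω) (Xn n ω)))
                  * maximal (DI t) w := by
                have h11 : (2:ℝ≥0∞)⁻¹ + 2⁻¹ ≤ 2⁻¹
                    + ENNReal.ofReal (4 * (K₀ * dist (XT ω) (Xn n ω))) * maximal (DI t) w := by
                  rw [ENNReal.inv_two_add_inv_two]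
                  exact key1.trans (add_le_add_left hchalf _)
                exact (ENNReal.add_le_add_iff_left (by norm_num : (2:ℝ≥0∞)⁻¹ ≠ ⊤)).1 h11
              rw [hSdef]
              exact (ENNReal.mul_le_mul_iff_right hc0 hct).1 (hchalf.trans hMwge)
            -- density-point argument: ω is in the fourth event
            have hnull : volume (ball (Xn n ω) (dist (XT ω) (Xn n ω)) \ S) = 0 := by
              have hset : {w : Euc d | ¬ (w ∈ ball (Xn n ω) (dist (XT ω) (Xn n ω)) → w ∈ S)}
                  = ball (Xn n ω) (dist (XT ω) (Xn n ω)) \ S := by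
                ext w
                simp only [Set.mem_setOf_eq, Set.mem_diff, Classical.not_imp]
              rw [ae_iff] at hball
              rw [← hset]
              exact hball
            have hcb : volume (closedBall (Xn n ω) (dist (XT ω) (Xn n ω) / 2))
                ≤ (volume.restrict S) (closedBall (Xn n ω) (dist (XT ω) (Xn n ω) / 2)) := by
              rw [Measure.restrict_apply measurableSet_closedBall]
              calc volume (closedBall (Xn n ω) (dist (XT ω) (Xn n ω) / 2))
                  ≤ volume (closedBall (Xn n ω) (dist (XT ω) (Xn n ω) / 2) ∩ S)
                    + volume (closedBall (Xn n ω) (dist (XT ω) (Xn n ω) / 2) \ S) :=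
                    measure_le_inter_add_diff _ _ _
                _ ≤ volume (closedBall (Xn n ω) (dist (XT ω) (Xn n ω) / 2) ∩ S)
                    + volume (ball (Xn n ω) (dist (XT ω) (Xn n ω)) \ S) := by
                    refine add_le_add le_rfl (measure_mono (Set.diff_subset_diff_left ?_))
                    exact closedBall_subset_ball (by linarith)
                _ = volume (closedBall (Xn n ω) (dist (XT ω) (Xn n ω) / 2) ∩ S) := by
                    rw [hnull, add_zero]
            have hcbpos : 0 < volume (closedBall (Xn n ω) (dist (XT ω) (Xn n ω) / 2)) :=
              lt_of_lt_of_le (measure_ball_pos volume _ (by linarith : 0 < dist (XT ω) (Xn n ω) / 2))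
                (measure_mono ball_subset_closedBall)
            have hcbne : volume (closedBall (Xn n ω) (dist (XT ω) (Xn n ω) / 2)) ≠ ⊤ :=
              measure_closedBall_lt_top.ne
            have hE4m : (2:ℝ≥0∞)⁻¹ < maximal (volume.restrict S) (Xn n ω) := by
              have h1le : (1:ℝ≥0∞) ≤ (volume.restrict S) (closedBall (Xn n ω) (dist (XT ω) (Xn n ω) / 2))
                  / volume (closedBall (Xn n ω) (dist (XT ω) (Xn n ω) / 2)) := by
                rw [ENNReal.le_div_iff_mul_le (Or.inl hcbpos.ne') (Or.inl hcbne), one_mul]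
                exact hcb
              refine lt_of_lt_of_le (by norm_num : (2:ℝ≥0∞)⁻¹ < 1) (h1le.trans ?_)
              exact aux_le_maximal (volume.restrict S) _ (by linarith : 0 < dist (XT ω) (Xn n ω) / 2)
            exact le_trans (step _ ω hE4m) le_add_self
        -- integrate the pointwise bound
        have hmi1 : Measurable ((toMeasurable P (XT ⁻¹' {x | ENNReal.ofReal lam < maximal (DI t) x})).indicator
            (fun _ => (1:ℝ≥0∞))) := measurable_const.indicator (measurableSet_toMeasurable _ _)
        have hmi2 : Measurable ((toMeasurable P (Xn n ⁻¹' {x | ENNReal.ofReal lam < maximal (DI t) x})).indicator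
            (fun _ => (1:ℝ≥0∞))) := measurable_const.indicator (measurableSet_toMeasurable _ _)
        have hmi3 : Measurable ((toMeasurable P {ω' | ρ < dist (XT ω') (Xn n ω')}).indicator
            (fun _ => (1:ℝ≥0∞))) := measurable_const.indicator (measurableSet_toMeasurable _ _)
        have hint : (∫⁻ ω, F2 ω t ∂P)
            ≤ P (XT ⁻¹' {x | ENNReal.ofReal lam < maximal (DI t) x})
              + P (Xn n ⁻¹' {x | ENNReal.ofReal lam < maximal (DI t) x})
              + P {ω' | ρ < dist (XT ω') (Xn n ω')}
              + P (Xn n ⁻¹' {y | (2:ℝ≥0∞)⁻¹ < maximal (volume.restrict S) y}) := by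
          refine le_trans (lintegral_mono_ae hptwise) (le_of_eq ?_)
          rw [lintegral_add_left (((hmi1.add hmi2).add hmi3 : Measurable fun a => _ + _ + _)),
            lintegral_add_left ((hmi1.add hmi2 : Measurable fun a => _ + _)), lintegral_add_left hmi1,
            lintegral_indicator_const (measurableSet_toMeasurable _ _),
            lintegral_indicator_const (measurableSet_toMeasurable _ _),
            lintegral_indicator_const (measurableSet_toMeasurable _ _),
            lintegral_indicator_const (measurableSet_toMeasurable _ _),
            one_mul, one_mul, one_mul, one_mul,
            measure_toMeasurable, measure_toMeasurable, measure_toMeasurable, measure_toMeasurable]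
        -- bound the four probabilities
        have hE1b : P (XT ⁻¹' {x | ENNReal.ofReal lam < maximal (DI t) x})
            ≤ κ₁ * (DI t Set.univ * ((n:ℕ) : ℝ≥0∞) ^ (-(δ / 2))) := by
          calc P (XT ⁻¹' {x | ENNReal.ofReal lam < maximal (DI t) x})
              ≤ D * volume {x | ENNReal.ofReal lam < maximal (DI t) x} :=
                aux_push P XT hXT pX hdX D hbX _
            _ ≤ D * (ENNReal.ofReal A₁ * DI t Set.univ / ENNReal.ofReal lam) :=
                mul_le_mul_right (hweak (DI t) htfin _ hlamE0) D
            _ = κ₁ * (DI t Set.univ * ((n:ℕ) : ℝ≥0∞) ^ (-(δ / 2))) := by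
                rw [div_eq_mul_inv, hlaminv, hκ₁def]
                ring
        have hE2b : P (Xn n ⁻¹' {x | ENNReal.ofReal lam < maximal (DI t) x})
            ≤ κ₁ * (DI t Set.univ * ((n:ℕ) : ℝ≥0∞) ^ (-(δ / 2))) := by
          calc P (Xn n ⁻¹' {x | ENNReal.ofReal lam < maximal (DI t) x})
              ≤ D * volume {x | ENNReal.ofReal lam < maximal (DI t) x} :=
                aux_push P (Xn n) (hXn n) (pXn n) (hdXn n hn) D (hbXn n hn) _
            _ ≤ D * (ENNReal.ofReal A₁ * DI t Set.univ / ENNReal.ofReal lam) :=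
                mul_le_mul_right (hweak (DI t) htfin _ hlamE0) D
            _ = κ₁ * (DI t Set.univ * ((n:ℕ) : ℝ≥0∞) ^ (-(δ / 2))) := by
                rw [div_eq_mul_inv, hlaminv, hκ₁def]
                ring
        have hE3b : P {ω' | ρ < dist (XT ω') (Xn n ω')} ≤ Cp * ((n:ℕ) : ℝ≥0∞) ^ (-(δ / 2)) := by
          have hedist : Measurable fun ω => edist (XT ω) (Xn n ω) ^ p :=
            (ENNReal.continuous_rpow_const (y := p)).measurable.comp (hXT.edist (hXn n))
          have hsub : {ω' | ρ < dist (XT ω') (Xn n ω')}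
              ⊆ {ω' | (ENNReal.ofReal ρ) ^ p ≤ edist (XT ω') (Xn n ω') ^ p} := by
            intro ω hω
            have h0 : ENNReal.ofReal ρ ≤ edist (XT ω) (Xn n ω) := by
              rw [edist_dist]
              exact ENNReal.ofReal_le_ofReal (le_of_lt hω)
            exact ENNReal.rpow_le_rpow h0 hp.le
          have hρp0 : (ENNReal.ofReal ρ) ^ p ≠ 0 :=
            (ENNReal.rpow_pos (ENNReal.ofReal_pos.2 hρ) ENNReal.ofReal_ne_top).ne'
          have hρpt : (ENNReal.ofReal ρ) ^ p ≠ ⊤ :=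
            ENNReal.rpow_ne_top_of_nonneg hp.le ENNReal.ofReal_ne_top
          have h4 : (ENNReal.ofReal ρ) ^ p * P {ω' | ρ < dist (XT ω') (Xn n ω')}
              ≤ Cp * ((n:ℕ) : ℝ≥0∞) ^ (-(p / 2)) :=
            le_trans (mul_le_mul_right (measure_mono hsub) _)
              ((mul_meas_ge_le_lintegral₀ (μ := P) hedist.aemeasurable
                ((ENNReal.ofReal ρ) ^ p)).trans (hCpb n hn))
          have h5 : P {ω' | ρ < dist (XT ω') (Xn n ω')}
              ≤ Cp * ((n:ℕ) : ℝ≥0∞) ^ (-(p / 2)) / (ENNReal.ofReal ρ) ^ p :=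
            (ENNReal.le_div_iff_mul_le (Or.inl hρp0) (Or.inl hρpt)).2 (by rw [mul_comm]; exact h4)
          refine h5.trans_eq ?_
          rw [hρE, ← ENNReal.rpow_mul, div_eq_mul_inv, ← ENNReal.rpow_neg, mul_assoc,
            ← ENNReal.rpow_add _ _ hnE0 hnEt]
          have hexp : -(p / 2) + -(-(δ / 2) * p) = -(δ / 2) := by
            linear_combination (-(1:ℝ)/2) * hpδ
          rw [hexp]
        have hE4b : P (Xn n ⁻¹' {y | (2:ℝ≥0∞)⁻¹ < maximal (volume.restrict S) y})
            ≤ κ₄ * (DI t Set.univ * ((n:ℕ) : ℝ≥0∞) ^ (-(δ / 2))) := by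
          have hTw : volume {y | (2:ℝ≥0∞)⁻¹ < maximal (volume.restrict S) y}
              ≤ ENNReal.ofReal A₁ * (volume.restrict S) Set.univ / 2⁻¹ :=
            hweak (volume.restrict S) hSfin 2⁻¹ (by norm_num)
          have hμSuniv : (volume.restrict S) Set.univ = volume S := Measure.restrict_apply_univ S
          have hlam2inv : (ENNReal.ofReal (lam / 2))⁻¹
              = ENNReal.ofReal (16 * K₀) * ((n:ℕ) : ℝ≥0∞) ^ (-(δ / 2)) := by
            rw [← hρE, ← ENNReal.ofReal_mul (by positivity),
              ← ENNReal.ofReal_inv_of_pos (by linarith : (0:ℝ) < lam / 2)]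
            congr 1
            rw [hlamdef, div_eq_mul_inv, mul_inv, inv_inv, inv_inv]
            ring
          calc P (Xn n ⁻¹' {y | (2:ℝ≥0∞)⁻¹ < maximal (volume.restrict S) y})
              ≤ D * volume {y | (2:ℝ≥0∞)⁻¹ < maximal (volume.restrict S) y} :=
                aux_push P (Xn n) (hXn n) (pXn n) (hdXn n hn) D (hbXn n hn) _
            _ ≤ D * (ENNReal.ofReal A₁ * (volume.restrict S) Set.univ / 2⁻¹) :=
                mul_le_mul_right hTw D
            _ = D * (ENNReal.ofReal A₁ * volume S * 2) := by
                rw [hμSuniv, div_eq_mul_inv, inv_inv]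
            _ ≤ D * (ENNReal.ofReal A₁
                  * (ENNReal.ofReal A₁ * DI t Set.univ / ENNReal.ofReal (lam / 2)) * 2) :=
                mul_le_mul_right (mul_le_mul_left (mul_le_mul_right hvolS _) 2) D
            _ = κ₄ * (DI t Set.univ * ((n:ℕ) : ℝ≥0∞) ^ (-(δ / 2))) := by
                rw [div_eq_mul_inv, hlam2inv, hκ₄def]
                ring
        -- put the four bounds together
        calc (∫⁻ ω, F2 ω t ∂P)
            ≤ P (XT ⁻¹' {x | ENNReal.ofReal lam < maximal (DI t) x})
              + P (Xn n ⁻¹' {x | ENNReal.ofReal lam < maximal (DI t) x})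
              + P {ω' | ρ < dist (XT ω') (Xn n ω')}
              + P (Xn n ⁻¹' {y | (2:ℝ≥0∞)⁻¹ < maximal (volume.restrict S) y}) := hint
          _ ≤ κ₁ * (DI t Set.univ * ((n:ℕ) : ℝ≥0∞) ^ (-(δ / 2)))
              + κ₁ * (DI t Set.univ * ((n:ℕ) : ℝ≥0∞) ^ (-(δ / 2)))
              + Cp * ((n:ℕ) : ℝ≥0∞) ^ (-(δ / 2))
              + κ₄ * (DI t Set.univ * ((n:ℕ) : ℝ≥0∞) ^ (-(δ / 2))) :=
              add_le_add (add_le_add (add_le_add hE1b hE2b) hE3b) hE4b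
          _ = (Set.Icc (-Mr) Mr).indicator (fun _ => Cp * ((n:ℕ) : ℝ≥0∞) ^ (-(δ / 2))) t
              + κ * ((n:ℕ) : ℝ≥0∞) ^ (-(δ / 2)) * DI t Set.univ := by
              rw [Set.indicator_of_mem hTin, hκdef]
              ring
    -- assemble via layer-cake and Tonelli
    have hCpn := hCpb n hn
    calc (∫⁻ ω, ENNReal.ofReal |f' (XT ω) - f' (Xn n ω)| ∂P)
        = ∫⁻ ω, ∫⁻ t, F2 ω t ∂(volume : Measure ℝ) ∂P := by
          refine lintegral_congr fun ω => ?_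
          rw [hF2def]
          exact (aux_layer (f' (XT ω)) (f' (Xn n ω))).symm
      _ = ∫⁻ t, ∫⁻ ω, F2 ω t ∂P ∂(volume : Measure ℝ) := lintegral_lintegral_swap hmeas.aemeasurable
      _ ≤ ∫⁻ t, ((Set.Icc (-Mr) Mr).indicator (fun _ => Cp * ((n:ℕ) : ℝ≥0∞) ^ (-(δ / 2))) t
            + κ * ((n:ℕ) : ℝ≥0∞) ^ (-(δ / 2)) * DI t Set.univ) ∂(volume : Measure ℝ) :=
          lintegral_mono_ae hmain
      _ = Cp * ((n:ℕ) : ℝ≥0∞) ^ (-(δ / 2)) * volume (Set.Icc (-Mr) Mr)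
            + (κ * ((n:ℕ) : ℝ≥0∞) ^ (-(δ / 2))) * ∫⁻ t, DI t Set.univ ∂(volume : Measure ℝ) := by
          rw [lintegral_add_left (measurable_const.indicator measurableSet_Icc),
            lintegral_indicator_const measurableSet_Icc,
            lintegral_const_mul' _ _ (ENNReal.mul_ne_top hκtop hrpow_ne_top)]
      _ = Cp * ((n:ℕ) : ℝ≥0∞) ^ (-(δ / 2)) * ENNReal.ofReal (Mr - -Mr)
            + (κ * ((n:ℕ) : ℝ≥0∞) ^ (-(δ / 2))) * Df Set.univ := by
          rw [Real.volume_Icc, hcoarea]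
      _ = C' * ((n:ℕ) : ℝ≥0∞) ^ (-(δ / 2)) := by
          rw [hC'def]
          ring
  -- reduce the q-th power to the first power
  obtain ⟨B1, hB1def⟩ : ∃ b : ℝ≥0∞, b = (ENNReal.ofReal (2 * Mr) + 1) ^ (q - 1) := ⟨_, rfl⟩
  have hB1top : B1 ≠ ⊤ := by
    rw [hB1def]
    exact ENNReal.rpow_ne_top_of_nonneg (by linarith)
      (ENNReal.add_ne_top.2 ⟨ENNReal.ofReal_ne_top, ENNReal.one_ne_top⟩)
  refine ⟨B1 * C', ENNReal.mul_ne_top hB1top hC'top, fun n hn => ?_⟩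
  have hq0 : ∀ᵐ ω ∂P, ENNReal.ofReal |f (XT ω) - f (Xn n ω)| ^ q
      ≤ B1 * ENNReal.ofReal |f' (XT ω) - f' (Xn n ω)| := by
    filter_upwards [transferX _ hfbd, transferY n hn _ hfbd,
      transferX (fun x => f x = f' x) hff', transferY n hn (fun x => f x = f' x) hff']
      with ω h1 h2 h3 h4
    rw [h3, h4]
    have ha : ENNReal.ofReal |f' (XT ω) - f' (Xn n ω)| ≤ ENNReal.ofReal (2 * Mr) := by
      refine ENNReal.ofReal_le_ofReal ?_
      have h5 := abs_sub (f' (XT ω)) (f' (Xn n ω))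
      linarith
    rcases eq_or_ne (ENNReal.ofReal |f' (XT ω) - f' (Xn n ω)|) 0 with h0 | h0
    · rw [h0, ENNReal.zero_rpow_of_pos (by linarith : (0:ℝ) < q)]
      exact zero_le
    · have hat : ENNReal.ofReal |f' (XT ω) - f' (Xn n ω)| ≠ ⊤ := ENNReal.ofReal_ne_top
      calc ENNReal.ofReal |f' (XT ω) - f' (Xn n ω)| ^ q
          = ENNReal.ofReal |f' (XT ω) - f' (Xn n ω)| ^ (q - 1)
            * ENNReal.ofReal |f' (XT ω) - f' (Xn n ω)| ^ (1:ℝ) := by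
            rw [← ENNReal.rpow_add _ _ h0 hat]
            norm_num
        _ = ENNReal.ofReal |f' (XT ω) - f' (Xn n ω)| ^ (q - 1)
            * ENNReal.ofReal |f' (XT ω) - f' (Xn n ω)| := by
            rw [ENNReal.rpow_one]
        _ ≤ B1 * ENNReal.ofReal |f' (XT ω) - f' (Xn n ω)| := by
            rw [hB1def]
            exact mul_le_mul_left (ENNReal.rpow_le_rpow (ha.trans le_self_add) (by linarith)) _
  calc (∫⁻ ω, ENNReal.ofReal |f (XT ω) - f (Xn n ω)| ^ q ∂P)
      ≤ ∫⁻ ω, B1 * ENNReal.ofReal |f' (XT ω) - f' (Xn n ω)| ∂P := lintegral_mono_ae hq0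
    _ = B1 * ∫⁻ ω, ENNReal.ofReal |f' (XT ω) - f' (Xn n ω)| ∂P := lintegral_const_mul' _ _ hB1top
    _ ≤ B1 * (C' * (n : ℝ≥0∞) ^ (-(δ / 2))) := mul_le_mul_right (key n hn) _
    _ = B1 * C' * (n : ℝ≥0∞) ^ (-(δ / 2)) := by rw [mul_assoc]
end
end

section
/- Let g : [0,∞) → [0,∞) and Ψ(x) = sup_{y≥0}(xy − Φ(y)) with Φ(y) = y^p (log(e+y))^α where p > 1−α and −1 ≤ α < 0. Then Ψ(2x) ≤ 2^{(α+p)/(α+p−1)} Ψ(x) for all x ≥ 0. -/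
noncomputable section

/-- The N-function `Φ(x) = x^p (log(e + x))^α`. -/
def PhiLog (p α x : ℝ) : ℝ := x ^ p * Real.log (Real.exp 1 + x) ^ α

/-- Young's complementary function `Ψ(x) = sup_{y ≥ 0} (x y − Φ(y))`. -/
def YoungCompl (Φ : ℝ → ℝ) (x : ℝ) : ℝ := sSup {z : ℝ | ∃ y ≥ (0:ℝ), z = x * y - Φ y}

/-- Example 2.5 (ii), case `p > 1 − α`, `−1 ≤ α < 0`: the complementary function of
`Φ(x) = x^p (log(e+x))^α` satisfies `Ψ(2x) ≤ 2^{(α+p)/(α+p−1)} Ψ(x)` for all `x ≥ 0`. -/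
theorem stmt_18 (p α : ℝ) (hα₁ : -1 ≤ α) (hα₀ : α < 0) (hp : 1 - α < p) :
    ∀ x ≥ (0:ℝ),
      YoungCompl (PhiLog p α) (2 * x) ≤ 2 ^ ((α + p) / (α + p - 1)) * YoungCompl (PhiLog p α) x := by
  intro x hx
  have hs0 : 0 < α + p - 1 := by linarith
  set s : ℝ := α + p - 1 with hsdef
  set μ : ℝ := (2:ℝ) ^ (1/s) with hμdef
  have hμ1 : 1 < μ := by
    rw [hμdef]
    apply Real.one_lt_rpow_iff_of_pos (by norm_num) |>.mpr
    exact Or.inl ⟨by norm_num, by positivity⟩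
  have hμ0 : 0 < μ := lt_trans one_pos hμ1
  set C : ℝ := (2:ℝ) ^ ((α + p) / (α + p - 1)) with hCdef
  have hC0 : 0 < C := by rw [hCdef]; positivity
  have hCμ : C = 2 * μ := by
    rw [hCdef, hμdef, ← Real.rpow_one_add' (by norm_num) (by positivity)]
    congr 1
    have hne : α + p - 1 ≠ 0 := by rw [← hsdef]; exact hs0.ne'
    rw [hsdef, one_add_div hne]; congr 1; ring
  have hCμ2 : μ ^ (α + p) = C := by
    rw [hCdef, hμdef, ← Real.rpow_mul (by norm_num)]
    congr 1
    rw [hsdef]; ring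
  -- Φ(0) = 0
  have hΦ0 : PhiLog p α 0 = 0 := by
    simp [PhiLog, Real.zero_rpow (by nlinarith : p ≠ 0)]
  -- Φ comparison: Φ(μ z) ≥ C Φ(z)
  have hΦcomp : ∀ z ≥ (0:ℝ), C * PhiLog p α z ≤ PhiLog p α (μ * z) := by
    intro z hz
    set a : ℝ := Real.log (Real.exp 1 + z) with hadef
    set b : ℝ := Real.log (Real.exp 1 + μ * z) with hbdef
    have ha1 : 1 ≤ a := by
      rw [hadef]
      calc (1:ℝ) = Real.log (Real.exp 1) := (Real.log_exp 1).symm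
        _ ≤ _ := Real.log_le_log (Real.exp_pos 1) (by nlinarith)
    have hb1 : 1 ≤ b := by
      rw [hbdef]
      calc (1:ℝ) = Real.log (Real.exp 1) := (Real.log_exp 1).symm
        _ ≤ _ := Real.log_le_log (Real.exp_pos 1) (by nlinarith)
    have hba : b ≤ μ * a := by
      have h1 : b ≤ Real.log (μ * (Real.exp 1 + z)) := by
        rw [hbdef]
        apply Real.log_le_log (by positivity)
        nlinarith [Real.exp_pos 1]
      have h2 : Real.log (μ * (Real.exp 1 + z)) = Real.log μ + a := by
        rw [hadef, Real.log_mul (ne_of_gt hμ0) (by positivity)]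
      have h3 : Real.log μ ≤ μ - 1 := Real.log_le_sub_one_of_pos hμ0
      nlinarith
    have hbα : (μ * a) ^ α ≤ b ^ α :=
      Real.rpow_le_rpow_of_nonpos (by linarith) hba hα₀.le
    have hμa : (μ * a) ^ α = μ ^ α * a ^ α :=
      Real.mul_rpow hμ0.le (by linarith)
    have hzp : (0:ℝ) ≤ z ^ p := Real.rpow_nonneg hz p
    have hμz : (μ * z) ^ p = μ ^ p * z ^ p := Real.mul_rpow hμ0.le hz
    have hμap : μ ^ α * μ ^ p = μ ^ (α + p) := (Real.rpow_add hμ0 α p).symm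
    have hμp : (0:ℝ) < μ ^ p := Real.rpow_pos_of_pos hμ0 p
    calc C * PhiLog p α z = (μ ^ α * μ ^ p) * (z ^ p * a ^ α) := by
          rw [hμap, hCμ2]; rfl
      _ = μ ^ p * z ^ p * (μ ^ α * a ^ α) := by ring
      _ ≤ μ ^ p * z ^ p * b ^ α := by
          apply mul_le_mul_of_nonneg_left _ (by positivity)
          rw [← hμa]; exact hbα
      _ = PhiLog p α (μ * z) := by rw [PhiLog, hμz]
  -- pointwise inequality
  have hpt : ∀ y ≥ (0:ℝ), 2 * x * y - PhiLog p α y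
      ≤ C * (x * (y / μ) - PhiLog p α (y / μ)) := by
    intro y hy
    have hz : (0:ℝ) ≤ y / μ := div_nonneg hy hμ0.le
    have h1 : C * PhiLog p α (y / μ) ≤ PhiLog p α y := by
      have := hΦcomp (y / μ) hz
      rwa [mul_div_cancel₀ _ (ne_of_gt hμ0)] at this
    have h2 : C * (x * (y / μ)) = 2 * x * y := by
      rw [hCμ]; field_simp
    nlinarith
  -- 0 belongs to both sets
  have h0mem : ∀ x' ≥ (0:ℝ), (0:ℝ) ∈ {z : ℝ | ∃ y ≥ (0:ℝ), z = x' * y - PhiLog p α y} := by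
    intro x' _
    exact ⟨0, le_refl 0, by simp [hΦ0]⟩
  by_cases hbdd : BddAbove {z : ℝ | ∃ y ≥ (0:ℝ), z = x * y - PhiLog p α y}
  · have hΨx0 : 0 ≤ YoungCompl (PhiLog p α) x := le_csSup hbdd (h0mem x hx)
    apply Real.sSup_le
    · rintro z ⟨y, hy, rfl⟩
      calc 2 * x * y - PhiLog p α y
          ≤ C * (x * (y / μ) - PhiLog p α (y / μ)) := hpt y hy
        _ ≤ C * YoungCompl (PhiLog p α) x := by
            apply mul_le_mul_of_nonneg_left _ hC0.le
            exact le_csSup hbdd ⟨y / μ, div_nonneg hy hμ0.le, rfl⟩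
    · exact mul_nonneg hC0.le hΨx0
  · have hbdd2 : ¬ BddAbove {z : ℝ | ∃ y ≥ (0:ℝ), z = 2 * x * y - PhiLog p α y} := by
      intro ⟨M, hM⟩
      apply hbdd
      refine ⟨M, ?_⟩
      rintro z ⟨y, hy, rfl⟩
      have : 2 * x * y - PhiLog p α y ≤ M := hM ⟨y, hy, rfl⟩
      nlinarith
    rw [YoungCompl, YoungCompl, Real.sSup_of_not_bddAbove hbdd, Real.sSup_of_not_bddAbove hbdd2]
    simp
end
end
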